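/- Let n ≥ 1 and let f : (Fin n → ZMod 2) → ZMod 2 be a quadratic Boolean function, i.e. f(x) = ∑_{i<j} b_{i,j}·x_i·x_j + ∑_i c_i·x_i + c₀ for some coefficients b_{i,j}, c_i, c₀ ∈ ZMod 2. Then f is balanced if and only if there exists an f-parity-reversing vector, i.e. some a ∈ (Fin n → ZMod 2) with f(x + a) = f(x) + 1 for all x. -/

import Mathlib

/-- Hamming weight of a Boolean function in `n` variables. -/
noncomputable def wtB {n : ℕ} (f : (Fin n → ZMod 2) → ZMod 2) : ℕ :=
  Nat.card {x : Fin n → ZMod 2 // f x = 1}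

/-- Integer-valued character on `ZMod 2`. -/
def chiZ : ZMod 2 → ℤ := fun v => if v = 1 then -1 else 1

lemma chiZ_add : ∀ u v : ZMod 2, chiZ (u + v) = chiZ u * chiZ v := by decide

lemma chiZ_zero : chiZ 0 = 1 := by decide
lemma chiZ_one : chiZ 1 = -1 := by decide

/-- The bilinear form attached to the quadratic part. -/
def ellB (n : ℕ) (b : Fin n → Fin n → ZMod 2)
    (a x : Fin n → ZMod 2) : ZMod 2 :=
  ∑ i : Fin n, ∑ j ∈ Finset.univ.filter (fun j : Fin n => i < j),
    b i j * (x i * a j + a i * x j)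

lemma derivB (n : ℕ) (f : (Fin n → ZMod 2) → ZMod 2)
    (b : Fin n → Fin n → ZMod 2) (c : Fin n → ZMod 2) (c₀ : ZMod 2)
    (hf : ∀ x, f x =
      (∑ i : Fin n, ∑ j ∈ Finset.univ.filter (fun j : Fin n => i < j), b i j * x i * x j) +
        (∑ i : Fin n, c i * x i) + c₀)
    (a x : Fin n → ZMod 2) :
    f (x + a) = f x + ellB n b a x + (f a + c₀) := by
  have h2 : (2 : ZMod 2) = 0 := by decide
  have hQ : (∑ i : Fin n, ∑ j ∈ Finset.univ.filter (fun j : Fin n => i < j),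
        b i j * (x + a) i * (x + a) j)
      = (∑ i : Fin n, ∑ j ∈ Finset.univ.filter (fun j : Fin n => i < j), b i j * x i * x j)
        + (∑ i : Fin n, ∑ j ∈ Finset.univ.filter (fun j : Fin n => i < j), b i j * a i * a j)
        + ellB n b a x := by
    unfold ellB
    rw [← Finset.sum_add_distrib, ← Finset.sum_add_distrib]
    refine Finset.sum_congr rfl fun i _ => ?_
    rw [← Finset.sum_add_distrib, ← Finset.sum_add_distrib]
    refine Finset.sum_congr rfl fun j _ => ?_
    simp only [Pi.add_apply]; ring
  have hC : (∑ i : Fin n, c i * (x + a) i)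
      = (∑ i : Fin n, c i * x i) + (∑ i : Fin n, c i * a i) := by
    rw [← Finset.sum_add_distrib]
    refine Finset.sum_congr rfl fun i _ => ?_
    simp only [Pi.add_apply]; ring
  rw [hf (x + a), hf x, hf a]
  linear_combination hQ + hC - c₀ * h2

lemma ellB_add (n : ℕ) (b : Fin n → Fin n → ZMod 2) (a x y : Fin n → ZMod 2) :
    ellB n b a (x + y) = ellB n b a x + ellB n b a y := by
  unfold ellB
  rw [← Finset.sum_add_distrib]
  refine Finset.sum_congr rfl fun i _ => ?_
  rw [← Finset.sum_add_distrib]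
  refine Finset.sum_congr rfl fun j _ => ?_
  simp only [Pi.add_apply]; ring

lemma ellB_x_zero (n : ℕ) (b : Fin n → Fin n → ZMod 2) (a : Fin n → ZMod 2) :
    ellB n b a 0 = 0 := by simp [ellB]

lemma ellB_a_zero (n : ℕ) (b : Fin n → Fin n → ZMod 2) (x : Fin n → ZMod 2) :
    ellB n b 0 x = 0 := by simp [ellB]

lemma cardFn (n : ℕ) : (Fintype.card (Fin n → ZMod 2)) = 2 ^ n := by
  simp [Fintype.card_fun]

/-- Evaluation of the character sum of a linear form. -/
lemma T_eval (n : ℕ) (b : Fin n → Fin n → ZMod 2) (a : Fin n → ZMod 2) :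
    (∑ x : Fin n → ZMod 2, chiZ (ellB n b a x))
      = if ∀ x, ellB n b a x = 0 then ((2 : ℤ) ^ n) else 0 := by
  by_cases h : ∀ x, ellB n b a x = 0
  · rw [if_pos h]
    have : ∀ x : Fin n → ZMod 2, chiZ (ellB n b a x) = 1 := fun x => by
      rw [h x, chiZ_zero]
    rw [Finset.sum_congr rfl fun x _ => this x]
    simp [cardFn n]
  · rw [if_neg h]
    push_neg at h
    obtain ⟨x₀, hx₀⟩ := h
    have hx1 : ellB n b a x₀ = 1 := by
      revert hx₀; generalize ellB n b a x₀ = v; revert v; decide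
    have key : (∑ x : Fin n → ZMod 2, chiZ (ellB n b a x))
        = - ∑ x : Fin n → ZMod 2, chiZ (ellB n b a x) := by
      conv_lhs =>
        rw [show (∑ x : Fin n → ZMod 2, chiZ (ellB n b a x))
            = ∑ x : Fin n → ZMod 2, chiZ (ellB n b a (x + x₀)) from
          (Fintype.sum_equiv (Equiv.addRight x₀)
            (fun x => chiZ (ellB n b a (x + x₀)))
            (fun y => chiZ (ellB n b a y)) (fun x => by simp)).symm]
      have : ∀ x : Fin n → ZMod 2, chiZ (ellB n b a (x + x₀))
          = - chiZ (ellB n b a x) := fun x => by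
        rw [ellB_add, hx1, chiZ_add, chiZ_one]; ring
      rw [Finset.sum_congr rfl fun x _ => this x, Finset.sum_neg_distrib]
    linarith

lemma zmod2_helper : ∀ p q r : ZMod 2, p + (p + q + r) = q + r := by decide

lemma zmod2_self : ∀ v : ZMod 2, v + v = 0 := by decide

lemma hneq2 : ∀ v : ZMod 2, v ≠ 1 → chiZ v = 1 := by decide

/-- the square of the exponential sum. -/
lemma S_sq (n : ℕ) (f : (Fin n → ZMod 2) → ZMod 2)
    (b : Fin n → Fin n → ZMod 2) (c : Fin n → ZMod 2) (c₀ : ZMod 2)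
    (hf : ∀ x, f x =
      (∑ i : Fin n, ∑ j ∈ Finset.univ.filter (fun j : Fin n => i < j), b i j * x i * x j) +
        (∑ i : Fin n, c i * x i) + c₀) :
    (∑ x : Fin n → ZMod 2, chiZ (f x)) * (∑ x : Fin n → ZMod 2, chiZ (f x))
      = ∑ a : Fin n → ZMod 2, chiZ (f a + c₀) * ∑ x : Fin n → ZMod 2, chiZ (ellB n b a x) := by
  rw [Finset.sum_mul_sum]
  have step1 : ∀ x : Fin n → ZMod 2,
      (∑ y : Fin n → ZMod 2, chiZ (f x) * chiZ (f y))
        = ∑ a : Fin n → ZMod 2, chiZ (ellB n b a x) * chiZ (f a + c₀) := by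
    intro x
    have reindex : (∑ y : Fin n → ZMod 2, chiZ (f x) * chiZ (f y))
        = ∑ a : Fin n → ZMod 2, chiZ (f x) * chiZ (f (x + a)) := by
      refine (Fintype.sum_equiv (Equiv.addLeft x)
        (fun a => chiZ (f x) * chiZ (f (x + a)))
        (fun y => chiZ (f x) * chiZ (f y)) (fun a => by simp)).symm
    rw [reindex]
    refine Finset.sum_congr rfl fun a _ => ?_
    rw [← chiZ_add, derivB n f b c c₀ hf a x, zmod2_helper, chiZ_add]
  rw [Finset.sum_congr rfl fun x _ => step1 x, Finset.sum_comm]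
  refine Finset.sum_congr rfl fun a _ => ?_
  rw [Finset.mul_sum]
  exact Finset.sum_congr rfl fun x _ => by ring

lemma f_zero (n : ℕ) (f : (Fin n → ZMod 2) → ZMod 2)
    (b : Fin n → Fin n → ZMod 2) (c : Fin n → ZMod 2) (c₀ : ZMod 2)
    (hf : ∀ x, f x =
      (∑ i : Fin n, ∑ j ∈ Finset.univ.filter (fun j : Fin n => i < j), b i j * x i * x j) +
        (∑ i : Fin n, c i * x i) + c₀) :
    f 0 = c₀ := by
  rw [hf 0]; simp

lemma S_eq (n : ℕ) (f : (Fin n → ZMod 2) → ZMod 2) :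
    (∑ x : Fin n → ZMod 2, chiZ (f x)) = (2 : ℤ) ^ n - 2 * (wtB f : ℤ) := by
  classical
  have hw : (wtB f : ℤ) = ((Finset.univ.filter (fun x : Fin n → ZMod 2 => f x = 1)).card : ℤ) := by
    rw [wtB, Nat.card_eq_fintype_card, Fintype.card_subtype]
  rw [← Finset.sum_filter_add_sum_filter_not Finset.univ (fun x => f x = 1)
    (fun x => chiZ (f x))]
  have hneq : ∀ v : ZMod 2, ¬ v = 1 → chiZ v = 1 := by decide
  have h1 : (∑ x ∈ Finset.univ.filter (fun x : Fin n → ZMod 2 => f x = 1), chiZ (f x))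
      = -((Finset.univ.filter (fun x : Fin n → ZMod 2 => f x = 1)).card : ℤ) := by
    rw [Finset.sum_congr rfl fun x hx => by
      rw [(Finset.mem_filter.mp hx).2, chiZ_one]]
    simp
  have h2 : (∑ x ∈ Finset.univ.filter (fun x : Fin n → ZMod 2 => ¬ f x = 1), chiZ (f x))
      = ((Finset.univ.filter (fun x : Fin n → ZMod 2 => ¬ f x = 1)).card : ℤ) := by
    rw [Finset.sum_congr rfl fun x hx => hneq _ (Finset.mem_filter.mp hx).2]
    simp
  rw [h1, h2, hw]
  have hcard := Finset.card_filter_add_card_filter_not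
    (s := (Finset.univ : Finset (Fin n → ZMod 2))) (p := fun x => f x = 1)
  rw [Finset.card_univ, cardFn n] at hcard
  have hcard' : ((Finset.univ.filter (fun x : Fin n → ZMod 2 => f x = 1)).card : ℤ)
      + ((Finset.univ.filter (fun x : Fin n → ZMod 2 => ¬ f x = 1)).card : ℤ) = 2 ^ n := by
    exact_mod_cast hcard
  linarith

/-- A quadratic Boolean function is balanced iff it admits a parity-reversing vector. -/
theorem quadratic_balanced_iff_parity_reversing
    (n : ℕ) (hn : 1 ≤ n) (f : (Fin n → ZMod 2) → ZMod 2)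
    (b : Fin n → Fin n → ZMod 2) (c : Fin n → ZMod 2) (c₀ : ZMod 2)
    (hf : ∀ x, f x =
      (∑ i : Fin n, ∑ j ∈ Finset.univ.filter (fun j : Fin n => i < j), b i j * x i * x j) +
        (∑ i : Fin n, c i * x i) + c₀) :
    wtB f = 2 ^ (n - 1) ↔ ∃ a : Fin n → ZMod 2, ∀ x, f (x + a) = f x + 1 := by
  classical
  have hSeq := S_eq n f
  have hpow : (2 : ℤ) ^ n = 2 * 2 ^ (n - 1) := by
    rw [← pow_succ']
    congr 1
    omega
  have hbal : wtB f = 2 ^ (n - 1) ↔ (∑ x : Fin n → ZMod 2, chiZ (f x)) = 0 := by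
    rw [hSeq, hpow]
    constructor
    · intro h; rw [h]; push_cast; ring
    · intro h
      have : (wtB f : ℤ) = ((2 : ℤ)) ^ (n - 1) := by linarith
      exact_mod_cast this
  rw [hbal]
  constructor
  · -- balanced → exists parity-reversing; contrapositive via S² > 0
    intro hS
    by_contra hno
    push_neg at hno
    have hSq := S_sq n f b c c₀ hf
    rw [hS, mul_zero] at hSq
    -- every term is nonneg, and the term at a = 0 equals 2^n > 0
    have hterm : ∀ a : Fin n → ZMod 2,
        0 ≤ chiZ (f a + c₀) * ∑ x : Fin n → ZMod 2, chiZ (ellB n b a x) := by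
      intro a
      rw [T_eval]
      by_cases hK : ∀ x, ellB n b a x = 0
      · rw [if_pos hK]
        have hga : f a + c₀ ≠ 1 := by
          intro hg
          obtain ⟨x, hx⟩ := hno a
          exact hx (by rw [derivB n f b c c₀ hf a x, hK x, hg, add_zero])
        rw [hneq2 (f a + c₀) hga]
        positivity
      · rw [if_neg hK, mul_zero]
    have h0 : chiZ (f 0 + c₀) * ∑ x : Fin n → ZMod 2, chiZ (ellB n b 0 x) = (2 : ℤ) ^ n := by
      rw [T_eval, if_pos (fun x => ellB_a_zero n b x), f_zero n f b c c₀ hf,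
        zmod2_self c₀, chiZ_zero, one_mul]
    have hge : (2 : ℤ) ^ n
        ≤ ∑ a : Fin n → ZMod 2, chiZ (f a + c₀) * ∑ x : Fin n → ZMod 2, chiZ (ellB n b a x) := by
      calc (2 : ℤ) ^ n = chiZ (f 0 + c₀) * ∑ x : Fin n → ZMod 2, chiZ (ellB n b 0 x) := h0.symm
        _ ≤ _ := Finset.single_le_sum (fun a _ => hterm a) (Finset.mem_univ (0 : Fin n → ZMod 2))
    have hpos : (0 : ℤ) < 2 ^ n := by positivity
    linarith [hSq, hge]
  · -- parity-reversing → balanced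
    rintro ⟨a, ha⟩
    have key : (∑ x : Fin n → ZMod 2, chiZ (f x))
        = - ∑ x : Fin n → ZMod 2, chiZ (f x) := by
      conv_lhs =>
        rw [show (∑ x : Fin n → ZMod 2, chiZ (f x))
            = ∑ x : Fin n → ZMod 2, chiZ (f (x + a)) from
          (Fintype.sum_equiv (Equiv.addRight a)
            (fun x => chiZ (f (x + a)))
            (fun y => chiZ (f y)) (fun x => by simp)).symm]
      have : ∀ x : Fin n → ZMod 2, chiZ (f (x + a)) = - chiZ (f x) := fun x => by
        rw [ha x, chiZ_add, chiZ_one]; ring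
      rw [Finset.sum_congr rfl fun x _ => this x]
      exact Finset.sum_neg_distrib _
    linarith
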